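/- Let k ≥ 2, n ≥ 2k, and fix the k-element sets A = {1,...,k} and C = {1, k+1,...,2k-1} in {1,...,n}. The number of k-element subsets of {1,...,n} that intersect both A and C but do not contain the element 1 equals (2k-2)·(C(n-2,k-1) - C(n-k-1,k-1)) counted for elements of (A∪C)\{1} plus, for each of the n-2k+1 elements outside A∪C, C(n-2,k-1) - 2C(n-k-1,k-1) + C(n-2k,k-1); specifically, for i ∈ {2,...,2k-1}, the number of k-subsets containing i but not 1 and meeting both A and C is C(n-2,k-1) - C(n-k-1,k-1), and for i ∈ {2k,...,n} it is C(n-2,k-1) - 2C(n-k-1,k-1) + C(n-2k,k-1). -/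

import Mathlib

open Finset

private lemma filter_split {α : Type*} (P : Finset α) (q r : α → Prop)
    [DecidablePred q] [DecidablePred r] [DecidablePred (fun S => q S ∧ r S)]
    [DecidablePred (fun S => q S ∧ ¬ r S)] :
    (P.filter (fun S => q S ∧ r S)).card + (P.filter (fun S => q S ∧ ¬ r S)).card
      = (P.filter q).card := by
  classical
  have h1 : P.filter (fun S => q S ∧ r S) = (P.filter q).filter r := by
    ext x; simp only [Finset.mem_filter]; tauto
  have h2 : P.filter (fun S => q S ∧ ¬ r S) = (P.filter q).filter (fun S => ¬ r S) := by
    ext x; simp only [Finset.mem_filter]; tauto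
  rw [h1, h2]
  exact Finset.card_filter_add_card_filter_not r

private lemma count_disj (n k i : ℕ) (D : Finset ℕ) (hk : 1 ≤ k) (hin : i < n)
    (hiD : i ∉ D) (hD : D ⊆ Finset.range n) :
    ((Finset.powersetCard k (Finset.range n)).filter
        (fun S => i ∈ S ∧ Disjoint S D)).card
      = (n - 1 - D.card).choose (k - 1) := by
  classical
  have hsub : insert i D ⊆ Finset.range n := by
    intro x hx
    rcases Finset.mem_insert.1 hx with rfl | hx
    · exact Finset.mem_range.2 hin
    · exact hD hx
  have hcard : (Finset.range n \ insert i D).card = n - 1 - D.card := by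
    rw [Finset.card_sdiff_of_subset hsub, Finset.card_insert_of_notMem hiD, Finset.card_range]
    omega
  rw [← hcard, ← Finset.card_powersetCard]
  apply Finset.card_bij' (fun S _ => S.erase i) (fun T _ => insert i T)
  · intro S hS
    simp only [Finset.mem_filter] at hS
    exact Finset.insert_erase hS.2.1
  · intro T hT
    rw [Finset.mem_powersetCard] at hT
    have hiT : i ∉ T := by
      intro h
      have := hT.1 h
      rw [Finset.mem_sdiff] at this
      exact this.2 (Finset.mem_insert_self i D)
    exact Finset.erase_insert hiT


  · intro S hS
    simp only [Finset.mem_filter, Finset.mem_powersetCard] at hS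
    obtain ⟨⟨hSsub, hScard⟩, hiS, hdisj⟩ := hS
    rw [Finset.mem_powersetCard]
    constructor
    · intro x hx
      have hxi := Finset.ne_of_mem_erase hx
      have hxS := Finset.mem_of_mem_erase hx
      rw [Finset.mem_sdiff]
      refine ⟨hSsub hxS, ?_⟩
      intro hmem
      rcases Finset.mem_insert.1 hmem with rfl | hxD
      · exact hxi rfl
      · exact (Finset.disjoint_left.1 hdisj hxS) hxD
    · rw [Finset.card_erase_of_mem hiS, hScard]
  · intro T hT
    rw [Finset.mem_powersetCard] at hT
    obtain ⟨hTsub, hTcard⟩ := hT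
    have hiT : i ∉ T := by
      intro h
      have := hTsub h
      rw [Finset.mem_sdiff] at this
      exact this.2 (Finset.mem_insert_self i D)
    simp only [Finset.mem_filter, Finset.mem_powersetCard]
    refine ⟨⟨?_, ?_⟩, Finset.mem_insert_self i T, ?_⟩
    · intro x hx
      rcases Finset.mem_insert.1 hx with rfl | hx
      · exact Finset.mem_range.2 hin
      · exact (Finset.mem_sdiff.1 (hTsub hx)).1
    · rw [Finset.card_insert_of_notMem hiT, hTcard]; omega
    · rw [Finset.disjoint_left]
      intro x hx
      rcases Finset.mem_insert.1 hx with rfl | hx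
      · exact hiD
      · intro hxD
        exact (Finset.mem_sdiff.1 (hTsub hx)).2 (Finset.mem_insert_of_mem hxD)
theorem stmt_16 (n k : ℕ) (hk : 2 ≤ k) (hn : 2 * k ≤ n) :
    (∀ i, 1 ≤ i → i < 2 * k - 1 →
      (Nat.card {S : Finset ℕ // S ⊆ Finset.range n ∧ S.card = k ∧ i ∈ S ∧ 0 ∉ S ∧
          (S ∩ Finset.range k).Nonempty ∧
          (S ∩ insert 0 (Finset.Ico k (2 * k - 1))).Nonempty} : ℤ)
        = ((n - 2).choose (k - 1) : ℤ) - ((n - k - 1).choose (k - 1) : ℤ)) ∧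
    (∀ i, 2 * k - 1 ≤ i → i < n →
      (Nat.card {S : Finset ℕ // S ⊆ Finset.range n ∧ S.card = k ∧ i ∈ S ∧ 0 ∉ S ∧
          (S ∩ Finset.range k).Nonempty ∧
          (S ∩ insert 0 (Finset.Ico k (2 * k - 1))).Nonempty} : ℤ)
        = ((n - 2).choose (k - 1) : ℤ) - 2 * ((n - k - 1).choose (k - 1) : ℤ)
            + ((n - 2 * k).choose (k - 1) : ℤ)) := by
  classical
  set A : Finset ℕ := Finset.range k with hA
  set Cs : Finset ℕ := insert 0 (Finset.Ico k (2 * k - 1)) with hCs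
  set P : Finset (Finset ℕ) := Finset.powersetCard k (Finset.range n) with hP
  have h0C : (0 : ℕ) ∈ Cs := Finset.mem_insert_self 0 _
  have h0A : (0 : ℕ) ∈ A := Finset.mem_range.2 (by omega)
  have hCcard : Cs.card = k := by
    rw [hCs, Finset.card_insert_of_notMem (by simp; omega), Nat.card_Ico]
    omega
  have hCsub : Cs ⊆ Finset.range n := by
    intro x hx
    simp only [hCs, Finset.mem_insert, Finset.mem_Ico] at hx
    rw [Finset.mem_range]; omega
  have hAsub : A ⊆ Finset.range n := by
    intro x hx; rw [hA, Finset.mem_range] at hx; rw [Finset.mem_range]; omega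
  have hACunion : A ∪ Cs = Finset.range (2 * k - 1) := by
    ext x
    simp only [hA, hCs, Finset.mem_union, Finset.mem_insert, Finset.mem_Ico,
      Finset.mem_range]
    omega
  have hACsub : A ∪ Cs ⊆ Finset.range n := by
    rw [hACunion]; intro x hx; rw [Finset.mem_range] at *; omega
  -- card of the subtype equals card of a filter
  have hcardeq : ∀ i : ℕ,
      Nat.card {S : Finset ℕ // S ⊆ Finset.range n ∧ S.card = k ∧ i ∈ S ∧ 0 ∉ S ∧
          (S ∩ A).Nonempty ∧ (S ∩ Cs).Nonempty}
        = (P.filter (fun S => (i ∈ S ∧ 0 ∉ S) ∧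
            ((S ∩ A).Nonempty ∧ (S ∩ Cs).Nonempty))).card := by
    intro i
    have e : {S : Finset ℕ // S ⊆ Finset.range n ∧ S.card = k ∧ i ∈ S ∧ 0 ∉ S ∧
          (S ∩ A).Nonempty ∧ (S ∩ Cs).Nonempty}
        ≃ {S // S ∈ P.filter (fun S => (i ∈ S ∧ 0 ∉ S) ∧
            ((S ∩ A).Nonempty ∧ (S ∩ Cs).Nonempty))} := by
      apply Equiv.subtypeEquivRight
      intro S
      simp only [hP, Finset.mem_filter, Finset.mem_powersetCard]
      tauto
    rw [Nat.card_congr e, Nat.card_eq_fintype_card, Fintype.card_coe]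
  -- base count
  have hbase : ∀ i : ℕ, 1 ≤ i → i < n →
      (P.filter (fun S => i ∈ S ∧ 0 ∉ S)).card = (n - 2).choose (k - 1) := by
    intro i hi1 hin
    have : P.filter (fun S => i ∈ S ∧ 0 ∉ S)
        = P.filter (fun S => i ∈ S ∧ Disjoint S ({0} : Finset ℕ)) := by
      apply Finset.filter_congr
      intro S _
      simp [Finset.disjoint_singleton_right]
    rw [this, hP, count_disj n k i {0} (by omega) hin (by simp; omega)
      (by intro x hx; simp at hx; subst hx; rw [Finset.mem_range]; omega)]
    congr 1
  -- disjoint-from-A count (for i ≥ k)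
  have hdA : ∀ i : ℕ, k ≤ i → i < n →
      (P.filter (fun S => (i ∈ S ∧ 0 ∉ S) ∧ ¬ (S ∩ A).Nonempty)).card
        = (n - k - 1).choose (k - 1) := by
    intro i hik hin
    have : P.filter (fun S => (i ∈ S ∧ 0 ∉ S) ∧ ¬ (S ∩ A).Nonempty)
        = P.filter (fun S => i ∈ S ∧ Disjoint S A) := by
      apply Finset.filter_congr
      intro S _
      rw [Finset.not_nonempty_iff_eq_empty, ← Finset.disjoint_iff_inter_eq_empty]
      constructor
      · rintro ⟨⟨h1, _⟩, h2⟩; exact ⟨h1, h2⟩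
      · rintro ⟨h1, h2⟩
        exact ⟨⟨h1, fun h0 => Finset.disjoint_left.1 h2 h0 h0A⟩, h2⟩
    rw [this, hP, count_disj n k i A (by omega) hin (by rw [hA, Finset.mem_range]; omega)
      hAsub]
    rw [hA, Finset.card_range]
    congr 1
    omega
  -- disjoint-from-C count (for i ∉ Cs)
  have hdC : ∀ i : ℕ, i ∉ Cs → i < n →
      (P.filter (fun S => (i ∈ S ∧ 0 ∉ S) ∧ ¬ (S ∩ Cs).Nonempty)).card
        = (n - k - 1).choose (k - 1) := by
    intro i hiC hin
    have : P.filter (fun S => (i ∈ S ∧ 0 ∉ S) ∧ ¬ (S ∩ Cs).Nonempty)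
        = P.filter (fun S => i ∈ S ∧ Disjoint S Cs) := by
      apply Finset.filter_congr
      intro S _
      rw [Finset.not_nonempty_iff_eq_empty, ← Finset.disjoint_iff_inter_eq_empty]
      constructor
      · rintro ⟨⟨h1, _⟩, h2⟩; exact ⟨h1, h2⟩
      · rintro ⟨h1, h2⟩
        exact ⟨⟨h1, fun h0 => Finset.disjoint_left.1 h2 h0 h0C⟩, h2⟩
    rw [this, hP, count_disj n k i Cs (by omega) hin hiC hCsub, hCcard]
    congr 1
    omega
  -- disjoint-from-both count (for i ≥ 2k-1)
  have hdAC : ∀ i : ℕ, 2 * k - 1 ≤ i → i < n →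
      (P.filter (fun S => (i ∈ S ∧ 0 ∉ S) ∧
          (¬ (S ∩ A).Nonempty ∧ ¬ (S ∩ Cs).Nonempty))).card
        = (n - 2 * k).choose (k - 1) := by
    intro i hik hin
    have : P.filter (fun S => (i ∈ S ∧ 0 ∉ S) ∧
          (¬ (S ∩ A).Nonempty ∧ ¬ (S ∩ Cs).Nonempty))
        = P.filter (fun S => i ∈ S ∧ Disjoint S (A ∪ Cs)) := by
      apply Finset.filter_congr
      intro S _
      rw [Finset.not_nonempty_iff_eq_empty, Finset.not_nonempty_iff_eq_empty,
        ← Finset.disjoint_iff_inter_eq_empty, ← Finset.disjoint_iff_inter_eq_empty,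
        Finset.disjoint_union_right]
      constructor
      · rintro ⟨⟨h1, _⟩, h2⟩; exact ⟨h1, h2⟩
      · rintro ⟨h1, h2, h3⟩
        exact ⟨⟨h1, fun h0 => Finset.disjoint_left.1 h2 h0 h0A⟩, h2, h3⟩
    rw [this, hP, count_disj n k i (A ∪ Cs) (by omega) hin
      (by rw [hACunion, Finset.mem_range]; omega) hACsub]
    rw [hACunion, Finset.card_range]
    congr 1
    omega
  constructor
  · -- case 1: 1 ≤ i < 2k-1
    intro i hi1 hi2
    have hin : i < n := by omega
    rw [hcardeq i]
    by_cases hik : i < k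
    · -- i ∈ A, so (S ∩ A).Nonempty automatic
      have hpred : P.filter (fun S => (i ∈ S ∧ 0 ∉ S) ∧
            ((S ∩ A).Nonempty ∧ (S ∩ Cs).Nonempty))
          = P.filter (fun S => (i ∈ S ∧ 0 ∉ S) ∧ (S ∩ Cs).Nonempty) := by
        apply Finset.filter_congr
        intro S _
        constructor
        · rintro ⟨h1, _, h3⟩; exact ⟨h1, h3⟩
        · rintro ⟨h1, h3⟩
          exact ⟨h1, ⟨i, Finset.mem_inter.2 ⟨h1.1, Finset.mem_range.2 hik⟩⟩, h3⟩
      have hsplit := filter_split P (fun S => i ∈ S ∧ 0 ∉ S)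
        (fun S => (S ∩ Cs).Nonempty)
      have hiC : i ∉ Cs := by
        simp only [hCs, Finset.mem_insert, Finset.mem_Ico]
        omega
      rw [hpred]
      have h1 := hbase i hi1 hin
      have h2 := hdC i hiC hin
      omega
    · -- k ≤ i < 2k-1, so i ∈ Cs, (S ∩ Cs).Nonempty automatic
      have hiCs : i ∈ Cs := by
        simp only [hCs, Finset.mem_insert, Finset.mem_Ico]
        omega
      have hpred : P.filter (fun S => (i ∈ S ∧ 0 ∉ S) ∧
            ((S ∩ A).Nonempty ∧ (S ∩ Cs).Nonempty))
          = P.filter (fun S => (i ∈ S ∧ 0 ∉ S) ∧ (S ∩ A).Nonempty) := by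
        apply Finset.filter_congr
        intro S _
        constructor
        · rintro ⟨h1, h2, _⟩; exact ⟨h1, h2⟩
        · rintro ⟨h1, h2⟩
          exact ⟨h1, h2, ⟨i, Finset.mem_inter.2 ⟨h1.1, hiCs⟩⟩⟩
      have hsplit := filter_split P (fun S => i ∈ S ∧ 0 ∉ S)
        (fun S => (S ∩ A).Nonempty)
      rw [hpred]
      have h1 := hbase i hi1 hin
      have h2 := hdA i (by omega) hin
      omega
  · -- case 2: inclusion-exclusion
    intro i hi1 hin
    rw [hcardeq i]
    have hsplitA := filter_split P (fun S => i ∈ S ∧ 0 ∉ S)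
      (fun S => (S ∩ A).Nonempty)
    have hsplitAC := filter_split P (fun S => (i ∈ S ∧ 0 ∉ S) ∧ (S ∩ A).Nonempty)
      (fun S => (S ∩ Cs).Nonempty)
    have hsplitnAC := filter_split P (fun S => (i ∈ S ∧ 0 ∉ S) ∧ ¬ (S ∩ Cs).Nonempty)
      (fun S => (S ∩ A).Nonempty)
    -- normalize predicate shapes
    have e1 : P.filter (fun S => ((i ∈ S ∧ 0 ∉ S) ∧ (S ∩ A).Nonempty) ∧ (S ∩ Cs).Nonempty)
        = P.filter (fun S => (i ∈ S ∧ 0 ∉ S) ∧ ((S ∩ A).Nonempty ∧ (S ∩ Cs).Nonempty)) := by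
      apply Finset.filter_congr; intro S _; tauto
    have e2 : P.filter (fun S => ((i ∈ S ∧ 0 ∉ S) ∧ ¬ (S ∩ Cs).Nonempty) ∧ ¬ (S ∩ A).Nonempty)
        = P.filter (fun S => (i ∈ S ∧ 0 ∉ S) ∧
            (¬ (S ∩ A).Nonempty ∧ ¬ (S ∩ Cs).Nonempty)) := by
      apply Finset.filter_congr; intro S _; tauto
    have e3 : P.filter (fun S => ((i ∈ S ∧ 0 ∉ S) ∧ ¬ (S ∩ Cs).Nonempty) ∧ (S ∩ A).Nonempty)
        = P.filter (fun S => ((i ∈ S ∧ 0 ∉ S) ∧ (S ∩ A).Nonempty) ∧ ¬ (S ∩ Cs).Nonempty) := by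
      apply Finset.filter_congr; intro S _; tauto
    rw [e1] at hsplitAC
    rw [e2, e3] at hsplitnAC
    have h1 := hbase i (by omega) hin
    have h2 := hdA i (by omega) hin
    have h3 := hdC i (by simp only [hCs, Finset.mem_insert, Finset.mem_Ico]; omega) hin
    have h4 := hdAC i hi1 hin
    omega
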